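/- Let H: ℝⁿ → ℝ be continuously differentiable, J ∈ ℝ^{n×n} skew-symmetric (J = −Jᵀ), and D ∈ ℝ^{n×n} symmetric positive semidefinite. Then L(x) := H(x) − H(0) satisfies L(0) = 0 and, for every x ∈ ℝⁿ, ((J−D)∇H(x))·∇L(x) + (∇L(x))ᵀ D ∇L(x) = 0; that is, L = H − H(0) is a classical solution of the controllability HJB equation f·∇L + ½(∇L)ᵀ(ggᵀ)∇L = 0 for the port-Hamiltonian system with drift f = (J−D)∇H and noise/control matrix satisfying ggᵀ = 2D. -/

import Mathlib

open Matrix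

/-- The continuous linear map `v ↦ a ⬝ᵥ v`, representing the differential of a scalar
function with gradient vector `a`. -/
noncomputable def dotCLM {n : ℕ} (a : Fin n → ℝ) : (Fin n → ℝ) →L[ℝ] ℝ :=
  LinearMap.toContinuousLinearMap
    { toFun := fun v => a ⬝ᵥ v
      map_add' := by intro v w; simp [dotProduct_add]
      map_smul' := by intro c v; simp [dotProduct_smul] }

/-- For the port-Hamiltonian system with drift `f = (J-D)∇H` and `ggᵀ = 2D`
(`J` skew-symmetric, `D` symmetric positive semidefinite), the function
`L = H - H(0)` satisfies `L(0) = 0` and is a classical solution of the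
controllability HJB equation `f·∇L + ½(∇L)ᵀ(ggᵀ)∇L = 0`, i.e.
`((J-D)∇H)·∇L + (∇L)ᵀD∇L = 0` everywhere. -/
theorem portHamiltonian_controllability_function
    (n : ℕ) (H : (Fin n → ℝ) → ℝ) (gradH : (Fin n → ℝ) → (Fin n → ℝ))
    -- `H` is continuously differentiable with gradient `gradH`:
    (hH : ∀ x, HasFDerivAt H (dotCLM (gradH x)) x) (hHC1 : Continuous gradH)
    (J D : Matrix (Fin n) (Fin n) ℝ)
    (hJ : Jᵀ = -J) (hD : D.PosSemidef)
    (L : (Fin n → ℝ) → ℝ) (hL : L = fun x => H x - H 0)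
    (gradL : (Fin n → ℝ) → (Fin n → ℝ))
    -- `gradL` is the gradient of `L`:
    (hgradL : ∀ x, HasFDerivAt L (dotCLM (gradL x)) x) :
    L 0 = 0 ∧
      ∀ x, ((J - D) *ᵥ gradH x) ⬝ᵥ gradL x + gradL x ⬝ᵥ (D *ᵥ gradL x) = 0 := by
  have hgrad_eq : ∀ x, gradL x = gradH x := by
    intro x
    have h1 : HasFDerivAt L (dotCLM (gradH x)) x := by
      rw [hL]
      simpa using (hH x).sub_const (H 0)
    have h2 := (hgradL x).unique h1
    funext i
    have := congrArg (fun f : (Fin n → ℝ) →L[ℝ] ℝ => f (Pi.single i 1)) h2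
    simpa [dotCLM, LinearMap.toContinuousLinearMap, dotProduct_single] using this
  constructor
  · rw [hL]; ring
  · intro x
    rw [hgrad_eq x]
    set a := gradH x
    have hJa : (J *ᵥ a) ⬝ᵥ a = 0 := by
      have h1 : (J *ᵥ a) ⬝ᵥ a = (Jᵀ *ᵥ a) ⬝ᵥ a := by
        rw [dotProduct_comm, Matrix.dotProduct_mulVec, Matrix.mulVec_transpose]
      rw [hJ, Matrix.neg_mulVec, neg_dotProduct] at h1
      linarith
    have hDa : (D *ᵥ a) ⬝ᵥ a = a ⬝ᵥ (D *ᵥ a) := dotProduct_comm _ _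
    rw [Matrix.sub_mulVec, sub_dotProduct, hJa, hDa]
    ring
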